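/- Let X ⊆ ℝⁿ be a path-connected set, and suppose X = ⋃_{i∈I} B_i is a finite union where each B_i is C-Lipschitz normally embedded (i.e., the inner distance on B_i satisfies d_{B_i,inn}(x,y) ≤ C‖x−y‖ for all x,y ∈ B_i). Then the inner distance on X satisfies d_{X,inn}(x,y) ≤ (#I · C) · d_{X,diam}(x,y) for all x,y ∈ X, where d_{X,diam}(x,y) is the infimum of diameters of images of paths in X connecting x to y. -/

import Mathlib

open Set Metric ENNReal

/-- The inner (length) distance on a subset `X` of a normed space. -/
noncomputable def innerDist {E : Type*} [NormedAddCommGroup E] (X : Set E) (x y : E) : ℝ≥0∞ :=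
  ⨅ γ ∈ {γ : ℝ → E | ContinuousOn γ (Set.Icc 0 1) ∧ γ 0 = x ∧ γ 1 = y ∧
      ∀ t ∈ Set.Icc (0:ℝ) 1, γ t ∈ X}, eVariationOn γ (Set.Icc 0 1)

/-- The diameter distance on a subset `X` of a normed space. -/
noncomputable def diamDist {E : Type*} [NormedAddCommGroup E] (X : Set E) (x y : E) : ℝ≥0∞ :=
  ⨅ γ ∈ {γ : ℝ → E | ContinuousOn γ (Set.Icc 0 1) ∧ γ 0 = x ∧ γ 1 = y ∧
      ∀ t ∈ Set.Icc (0:ℝ) 1, γ t ∈ X}, EMetric.diam (γ '' Set.Icc (0:ℝ) 1)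


section Helpers
variable {E : Type*} [NormedAddCommGroup E]

def PathIn (X : Set E) (x y : E) (γ : ℝ → E) : Prop :=
  ContinuousOn γ (Set.Icc 0 1) ∧ γ 0 = x ∧ γ 1 = y ∧ ∀ t ∈ Set.Icc (0:ℝ) 1, γ t ∈ X

lemma innerDist_eq (X : Set E) (x y : E) :
    innerDist X x y = ⨅ (γ : ℝ → E) (_ : PathIn X x y γ), eVariationOn γ (Set.Icc 0 1) := rfl

lemma innerDist_le_path {X : Set E} {x y : E} {γ : ℝ → E} (h : PathIn X x y γ) :
    innerDist X x y ≤ eVariationOn γ (Set.Icc 0 1) := by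
  rw [innerDist_eq]; exact iInf₂_le γ h

lemma exists_path_lt {X : Set E} {x y : E} {c : ℝ≥0∞} (h : innerDist X x y < c) :
    ∃ γ, PathIn X x y γ ∧ eVariationOn γ (Set.Icc 0 1) < c := by
  rw [innerDist_eq, iInf_lt_iff] at h
  obtain ⟨γ, hγ⟩ := h
  rw [iInf_lt_iff] at hγ
  obtain ⟨hp, hlt⟩ := hγ
  exact ⟨γ, hp, hlt⟩

lemma innerDist_self {X : Set E} {x : E} (hx : x ∈ X) : innerDist X x x = 0 := by
  refine le_antisymm ?_ (zero_le)
  have h : PathIn X x x (fun _ => x) :=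
    ⟨continuousOn_const, rfl, rfl, fun t _ => hx⟩
  refine (innerDist_le_path h).trans ?_
  rw [eVariationOn.constant_on]
  exact (subsingleton_singleton.anti (by rintro _ ⟨t, _, rfl⟩; rfl))

lemma innerDist_mono {X Y : Set E} (h : X ⊆ Y) (x y : E) : innerDist Y x y ≤ innerDist X x y := by
  rw [innerDist_eq X, innerDist_eq Y]
  exact le_iInf₂ fun γ hγ =>
    iInf₂_le γ ⟨hγ.1, hγ.2.1, hγ.2.2.1, fun t ht => h (hγ.2.2.2 t ht)⟩

lemma continuousOn_union_closed {β : Type*} [TopologicalSpace β] {f : ℝ → β} {s t : Set ℝ}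
    (hs : IsClosed s) (ht : IsClosed t)
    (hfs : ContinuousOn f s) (hft : ContinuousOn f t) : ContinuousOn f (s ∪ t) := by
  intro u hu
  have H1 : ContinuousWithinAt f s u := by
    by_cases h : u ∈ s
    · exact hfs u h
    · exact continuousWithinAt_of_notMem_closure (by rwa [hs.closure_eq])
  have H2 : ContinuousWithinAt f t u := by
    by_cases h : u ∈ t
    · exact hft u h
    · exact continuousWithinAt_of_notMem_closure (by rwa [ht.closure_eq])
  exact H1.union H2

lemma PathIn.trans {X : Set E} {x y z : E} {γ₁ γ₂ : ℝ → E}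
    (h₁ : PathIn X x y γ₁) (h₂ : PathIn X y z γ₂) :
    ∃ γ, PathIn X x z γ ∧ eVariationOn γ (Set.Icc 0 1)
      = eVariationOn γ₁ (Set.Icc 0 1) + eVariationOn γ₂ (Set.Icc 0 1) := by
  obtain ⟨h₁c, h₁0, h₁1, h₁m⟩ := h₁
  obtain ⟨h₂c, h₂0, h₂1, h₂m⟩ := h₂
  refine ⟨fun t => if t ≤ 2⁻¹ then γ₁ (2*t) else γ₂ (2*t - 1), ?_, ?_⟩
  all_goals {
    set γ : ℝ → E := fun t => if t ≤ 2⁻¹ then γ₁ (2*t) else γ₂ (2*t - 1) with hγdef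
    have e₁ : Set.EqOn γ ((fun t => γ₁ t) ∘ (fun t : ℝ => 2*t)) (Set.Icc 0 2⁻¹) :=
      fun t ht => if_pos ht.2
    have e₂ : Set.EqOn γ ((fun t => γ₂ t) ∘ (fun t : ℝ => 2*t - 1)) (Set.Icc 2⁻¹ 1) := by
      intro t ht
      rcases eq_or_lt_of_le ht.1 with h | h
      · simp only [hγdef, ← h, Function.comp]
        norm_num [h₁1, h₂0]
      · exact if_neg (not_le.mpr h)
    have m₁ : Set.MapsTo (fun t : ℝ => 2*t) (Set.Icc 0 2⁻¹) (Set.Icc 0 1) := by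
      intro t ht
      simp only [Set.mem_Icc] at *
      constructor <;> linarith
    have m₂ : Set.MapsTo (fun t : ℝ => 2*t - 1) (Set.Icc 2⁻¹ 1) (Set.Icc 0 1) := by
      intro t ht
      simp only [Set.mem_Icc] at *
      constructor <;> linarith
    have c₁ : ContinuousOn γ (Set.Icc 0 2⁻¹) :=
      ContinuousOn.congr (h₁c.comp (by fun_prop) m₁) e₁
    have c₂ : ContinuousOn γ (Set.Icc 2⁻¹ 1) :=
      ContinuousOn.congr (h₂c.comp (by fun_prop) m₂) e₂
    have hcover : Set.Icc (0:ℝ) 1 = Set.Icc (0:ℝ) 2⁻¹ ∪ Set.Icc 2⁻¹ 1 :=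
      (Set.Icc_union_Icc_eq_Icc (by norm_num) (by norm_num)).symm
    first
    | · refine ⟨?_, ?_, ?_, ?_⟩
        · rw [hcover]
          exact continuousOn_union_closed isClosed_Icc isClosed_Icc c₁ c₂
        · show γ 0 = x
          simp only [hγdef]
          norm_num [h₁0]
        · show γ 1 = z
          simp only [hγdef]
          norm_num [h₂1]
        · intro t ht
          by_cases h : t ≤ 2⁻¹
          · show (if t ≤ 2⁻¹ then γ₁ (2*t) else γ₂ (2*t-1)) ∈ X
            rw [if_pos h]
            exact h₁m _ (m₁ ⟨ht.1, h⟩)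
          · show (if t ≤ 2⁻¹ then γ₁ (2*t) else γ₂ (2*t-1)) ∈ X
            rw [if_neg h]
            exact h₂m _ (m₂ ⟨le_of_not_ge h, ht.2⟩)
    | · have v : eVariationOn γ (Set.Icc 0 2⁻¹) + eVariationOn γ (Set.Icc 2⁻¹ 1)
            = eVariationOn γ (Set.Icc 0 1) := by
          have := eVariationOn.Icc_add_Icc γ (s := Set.univ) (a := (0:ℝ)) (b := 2⁻¹) (c := 1)
            (by norm_num) (by norm_num) trivial
          simpa using this
        have v₁ : eVariationOn γ (Set.Icc 0 2⁻¹) = eVariationOn γ₁ (Set.Icc 0 1) := by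
          have hm : MonotoneOn (fun t : ℝ => 2*t) (Set.Icc (0:ℝ) 2⁻¹) :=
            fun a _ b _ hab => show 2*a ≤ 2*b by linarith
          rw [eVariationOn.eq_of_eqOn e₁, eVariationOn.comp_eq_of_monotoneOn _ _ hm]
          have himg : (fun t : ℝ => 2*t) '' Set.Icc 0 2⁻¹ = Set.Icc 0 1 := by
            have h2 : (fun t : ℝ => 2*t) = (fun t : ℝ => 2*t + 0) := by funext t; ring
            rw [h2, Set.image_affine_Icc' (by norm_num : (0:ℝ) < 2)]
            norm_num
          rw [himg]
        have v₂ : eVariationOn γ (Set.Icc 2⁻¹ 1) = eVariationOn γ₂ (Set.Icc 0 1) := by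
          have hm : MonotoneOn (fun t : ℝ => 2*t - 1) (Set.Icc (2⁻¹:ℝ) 1) :=
            fun a _ b _ hab => show 2*a - 1 ≤ 2*b - 1 by linarith
          rw [eVariationOn.eq_of_eqOn e₂, eVariationOn.comp_eq_of_monotoneOn _ _ hm]
          have himg : (fun t : ℝ => 2*t - 1) '' Set.Icc 2⁻¹ 1 = Set.Icc 0 1 := by
            have h2 : (fun t : ℝ => 2*t - 1) = (fun t : ℝ => 2*t + (-1)) := by funext t; ring
            rw [h2, Set.image_affine_Icc' (by norm_num : (0:ℝ) < 2)]
            norm_num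
          rw [himg]
        rw [← v, v₁, v₂]
  }

lemma innerDist_triangle {X : Set E} (x y z : E) :
    innerDist X x z ≤ innerDist X x y + innerDist X y z := by
  refine ENNReal.le_of_forall_pos_le_add fun ε hε hfin => ?_
  have hxy : innerDist X x y ≠ ⊤ := fun h => by simp [h] at hfin
  have hyz : innerDist X y z ≠ ⊤ := fun h => by simp [h] at hfin
  have hε2 : ((ε : ℝ≥0∞) / 2) ≠ 0 := by
    simp [ENNReal.div_eq_zero_iff, hε.ne']
  obtain ⟨γ₁, hγ₁, hv₁⟩ := exists_path_lt (ENNReal.lt_add_right hxy hε2)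
  obtain ⟨γ₂, hγ₂, hv₂⟩ := exists_path_lt (ENNReal.lt_add_right hyz hε2)
  obtain ⟨γ, hγ, hv⟩ := hγ₁.trans hγ₂
  calc innerDist X x z ≤ eVariationOn γ (Set.Icc 0 1) := innerDist_le_path hγ
    _ = eVariationOn γ₁ (Set.Icc 0 1) + eVariationOn γ₂ (Set.Icc 0 1) := hv
    _ ≤ (innerDist X x y + ε/2) + (innerDist X y z + ε/2) := add_le_add hv₁.le hv₂.le
    _ = innerDist X x y + innerDist X y z + ((ε:ℝ≥0∞)/2 + (ε:ℝ≥0∞)/2) := by ring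
    _ = innerDist X x y + innerDist X y z + ε := by rw [ENNReal.add_halves]

end Helpers

section Helpers2
variable {E : Type*} [NormedAddCommGroup E]

lemma innerDist_comm (X : Set E) (x y : E) : innerDist X x y = innerDist X y x := by
  have key : ∀ a b : E, innerDist X b a ≤ innerDist X a b := by
    intro a b
    rw [innerDist_eq X a b, innerDist_eq X b a]
    refine le_iInf₂ fun γ hγ => ?_
    obtain ⟨hc, h0, h1, hm⟩ := hγ
    have hanti : AntitoneOn (fun t : ℝ => 1 - t) (Set.Icc (0:ℝ) 1) :=
      fun s _ t _ hst => show 1 - t ≤ 1 - s by linarith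
    have himg : (fun t : ℝ => 1 - t) '' Set.Icc 0 1 = Set.Icc 0 1 := by
      rw [Set.image_const_sub_Icc]; norm_num
    have hmaps : Set.MapsTo (fun t : ℝ => 1 - t) (Set.Icc 0 1) (Set.Icc 0 1) := by
      intro t ht; simp only [Set.mem_Icc] at *; constructor <;> linarith
    refine le_trans (iInf₂_le (fun t => γ (1 - t)) ⟨hc.comp (by fun_prop) hmaps,
      by norm_num [h1], by norm_num [h0], fun t ht => hm _ (hmaps ht)⟩) ?_
    rw [show (fun t : ℝ => γ (1-t)) = γ ∘ (fun t : ℝ => 1 - t) from rfl,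
      eVariationOn.comp_eq_of_antitoneOn _ _ hanti, himg]
  exact le_antisymm (key y x) (key x y)

set_option maxHeartbeats 2000000 in
/-- Key lemma: if `B` is `C`-LNE, `q ∈ B` and `p ∈ closure B` with `p ∈ Y`, `B ⊆ Y`,
then there are short paths in `Y` from `q` to `p`. -/
lemma innerDist_le_of_closure {B Y : Set E} (hBY : B ⊆ Y) {C : ℝ} (hC : 0 < C)
    (hLNE : ∀ x ∈ B, ∀ y ∈ B, innerDist B x y ≤ ENNReal.ofReal (C * ‖x - y‖))
    {p q : E} (hq : q ∈ B) (hp : p ∈ closure B) (hpY : p ∈ Y) :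
    innerDist Y q p ≤ ENNReal.ofReal (C * ‖q - p‖) := by
  rw [← dist_eq_norm]
  refine ENNReal.le_of_forall_pos_le_add fun ε hε _ => ?_
  have hεR : (0:ℝ) < ε := hε
  set δ : ℝ := ε / (3*C + 3) with hδdef
  have hδ : 0 < δ := div_pos hεR (by linarith)
  have hcl : ∀ r : ℝ, 0 < r → ∃ b ∈ B, dist p b < r :=
    fun r hr => Metric.mem_closure_iff.mp hp r hr
  choose pt hptB hptd using fun k : ℕ => hcl (δ * (1/2)^(k+1)) (by positivity)
  set x : ℕ → E := fun k => Nat.casesOn k q (fun j => pt j) with hxdef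
  have hxB : ∀ k, x k ∈ B := by intro k; cases k; exacts [hq, hptB _]
  have hxp : ∀ k : ℕ, dist (x (k+1)) p ≤ δ * (1/2)^(k+1) := fun k => by
    rw [dist_comm]; exact (hptd k).le
  set r : ℕ → ℝ := fun k => C * dist (x k) (x (k+1)) + δ * (1/2)^k with hrdef
  have hrpos : ∀ k, 0 < r k := fun k => by
    have h1 : 0 ≤ C * dist (x k) (x (k+1)) := by positivity
    have h2 : (0:ℝ) < δ * (1/2)^k := by positivity
    simp only [hrdef]; linarith
  have hpath : ∀ k, ∃ γ, PathIn B (x k) (x (k+1)) γ ∧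
      eVariationOn γ (Set.Icc 0 1) < ENNReal.ofReal (r k) := by
    intro k
    apply exists_path_lt
    refine lt_of_le_of_lt (hLNE _ (hxB k) _ (hxB (k+1))) ?_
    rw [← dist_eq_norm, ENNReal.ofReal_lt_ofReal_iff (hrpos k)]
    have : (0:ℝ) < δ * (1/2)^k := by positivity
    simp only [hrdef]; linarith
  choose γ hγ hℓ using hpath
  -- term bounds
  have htermS : ∀ k, r (k+1) ≤ (3*C/2 + 1) * (δ * (1/2)^(k+1)) := by
    intro k
    have hd : dist (x (k+1)) (x (k+2)) ≤ δ * (1/2)^(k+1) + δ * (1/2)^(k+2) :=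
      (dist_triangle (x (k+1)) p (x (k+2))).trans
        (add_le_add (hxp k) (by rw [dist_comm]; exact hxp (k+1)))
    have h22 : δ * (1/2)^(k+2) = (δ * (1/2)^(k+1)) / 2 := by ring
    have : dist (x (k+1)) (x (k+2)) ≤ (3/2) * (δ * (1/2)^(k+1)) := by
      rw [h22] at hd; linarith
    have hC' : C * dist (x (k+1)) (x (k+2)) ≤ C * ((3/2) * (δ * (1/2)^(k+1))) :=
      mul_le_mul_of_nonneg_left this hC.le
    simp only [hrdef]
    nlinarith [pow_pos (by norm_num : (0:ℝ) < 1/2) (k+1), hδ]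
  have hterm0 : r 0 ≤ C * dist q p + C*δ/2 + δ := by
    have hd : dist (x 0) (x 1) ≤ dist q p + δ * (1/2)^1 :=
      (dist_triangle q p (x 1)).trans (by
        have := hxp 0; rw [dist_comm] at this; linarith [this])
    have := mul_le_mul_of_nonneg_left hd hC.le
    simp only [hrdef]; norm_num at *; linarith
  -- partial real sums
  have hsum : ∀ n : ℕ, (∑ k ∈ Finset.range n, r k) ≤ C * dist q p + ε := by
    intro n
    have hqp : 0 ≤ C * dist q p := by positivity
    have hδε : (3*C + 3) * δ = ε := by
      rw [hδdef]; field_simp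
    cases n with
    | zero => simp; nlinarith
    | succ n =>
      rw [Finset.sum_range_succ']
      have htail : (∑ k ∈ Finset.range n, r (k+1)) ≤ (3*C/2 + 1) * δ := by
        calc (∑ k ∈ Finset.range n, r (k+1))
            ≤ ∑ k ∈ Finset.range n, (3*C/2 + 1) * (δ * (1/2)^(k+1)) :=
              Finset.sum_le_sum fun k _ => htermS k
          _ = (3*C/2 + 1) * δ * (1/2) * (∑ k ∈ Finset.range n, (1/2:ℝ)^k) := by
              rw [Finset.mul_sum]; exact Finset.sum_congr rfl fun k _ => by ring
          _ ≤ (3*C/2 + 1) * δ * (1/2) * 2 := by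
              have := sum_geometric_two_le n
              have hpos : (0:ℝ) ≤ (3*C/2 + 1) * δ * (1/2) := by positivity
              nlinarith
          _ = (3*C/2 + 1) * δ := by ring
      have hCδ : 0 ≤ C*δ := mul_nonneg hC.le hδ.le
      have he1 : (3*C/2+1)*δ = 3/2*(C*δ) + δ := by ring
      have he2 : C*δ/2 = 1/2*(C*δ) := by ring
      have he3 : 3*(C*δ) + 3*δ = (ε:ℝ) := by rw [← hδε]; ring
      generalize hgen : (∑ k ∈ Finset.range n, r (k+1)) = Ssum at htail ⊢
      generalize hgen0 : r 0 = r0 at hterm0 ⊢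
      linarith
  -- ENNReal partial sums
  have hsumE : ∀ n : ℕ, (∑ k ∈ Finset.range n, ENNReal.ofReal (r k))
      ≤ ENNReal.ofReal (C * dist q p + ε) := by
    intro n
    rw [← ENNReal.ofReal_sum_of_nonneg fun k _ => (hrpos k).le]
    exact ENNReal.ofReal_le_ofReal (hsum n)
  -- the dyadic block structure
  set a : ℕ → ℝ := fun k => 1 - (1/2)^k with hadef
  have ha0 : a 0 = 0 := by norm_num [hadef]
  have haS : ∀ k, a k < a (k+1) := by
    intro k
    have : ((1:ℝ)/2)^(k+1) < (1/2)^k := by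
      apply pow_lt_pow_right_of_lt_one₀ <;> norm_num
    simp only [hadef]; linarith
  have hamono : Monotone a := monotone_nat_of_le_succ fun k => (haS k).le
  have halt1 : ∀ k, a k < 1 := by
    intro k
    have : (0:ℝ) < (1/2)^k := by positivity
    simp only [hadef]; linarith
  have ha0le : ∀ k, 0 ≤ a k := fun k => ha0 ▸ hamono (Nat.zero_le k)
  have hadiff : ∀ k, a (k+1) - a k = (1/2)^(k+1) := by
    intro k; simp only [hadef]; ring
  have haex : ∀ t : ℝ, t < 1 → ∃ k, t < a (k+1) := by
    intro t ht
    obtain ⟨m, hm⟩ := exists_pow_lt_of_lt_one (sub_pos.mpr ht) (by norm_num : (1:ℝ)/2 < 1)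
    refine ⟨m, ?_⟩
    have h1 : ((1:ℝ)/2)^(m+1) ≤ (1/2)^m :=
      pow_le_pow_of_le_one (by norm_num) (by norm_num) (Nat.le_succ m)
    simp only [hadef]; linarith
  set K : ℝ → ℕ := fun t => sInf {k | t < a (k+1)} with hKdef
  have hKmem : ∀ {t : ℝ}, t < 1 → t < a (K t + 1) := fun {t} ht => Nat.sInf_mem (haex t ht)
  have hKeq : ∀ {t : ℝ} (k : ℕ), a k ≤ t → t < a (k+1) → K t = k := by
    intro t k h1 h2
    refine le_antisymm (Nat.sInf_le h2) ?_
    by_contra h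
    push_neg at h
    have ht1 : t < 1 := h2.trans (halt1 _)
    have : t < a (K t + 1) := hKmem ht1
    have : a (K t + 1) ≤ a k := hamono h
    linarith
  have hKlow : ∀ {t : ℝ}, 0 ≤ t → t < 1 → a (K t) ≤ t := by
    intro t h0 h1
    by_contra hlt
    push_neg at hlt
    have hKpos : K t ≠ 0 := by
      intro h; rw [h, ha0] at hlt; linarith
    obtain ⟨j, hj⟩ := Nat.exists_eq_succ_of_ne_zero hKpos
    rw [hj] at hlt
    have : K t ≤ j := Nat.sInf_le (show j ∈ {k | t < a (k+1)} from hlt)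
    omega
  -- the concatenated path
  set φ : ℕ → ℝ → ℝ := fun k t => (t - a k) * 2^(k+1) with hφdef
  have hφleft : ∀ k, φ k (a k) = 0 := fun k => by simp [hφdef]
  have hφright : ∀ k, φ k (a (k+1)) = 1 := by
    intro k
    have h2 : (2:ℝ)^(k+1) ≠ 0 := by positivity
    simp only [hφdef]
    rw [hadiff k, one_div, inv_pow, inv_mul_cancel₀ (by positivity : ((2:ℝ)^(k+1)) ≠ 0)]
  have hφmem : ∀ k t, a k ≤ t → t ≤ a (k+1) → φ k t ∈ Set.Icc (0:ℝ) 1 := by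
    intro k t h1 h2
    have h2p : (0:ℝ) < 2^(k+1) := by positivity
    constructor
    · simp only [hφdef]; nlinarith
    · rw [← hφright k]
      simp only [hφdef]
      nlinarith
  set Γ : ℝ → E := fun t => if h : t < 1 then γ (K t) (φ (K t) t) else p with hΓdef
  have hΓ1 : Γ 1 = p := by simp [hΓdef]
  have hΓblock : ∀ k t, a k ≤ t → t < a (k+1) → Γ t = γ k (φ k t) := by
    intro k t h1 h2
    have ht1 : t < 1 := h2.trans (halt1 _)
    simp only [hΓdef, dif_pos ht1, hKeq k h1 h2]
  have hΓa : ∀ k, Γ (a k) = x k := by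
    intro k
    rw [hΓblock k (a k) le_rfl (haS k), hφleft]
    exact (hγ k).2.1
  have hEq : ∀ k, Set.EqOn Γ ((γ k) ∘ (φ k)) (Set.Icc (a k) (a (k+1))) := by
    intro k t ht
    rcases lt_or_eq_of_le ht.2 with h | h
    · exact hΓblock k t ht.1 h
    · rw [h, hΓa (k+1)]
      show x (k+1) = γ k (φ k (a (k+1)))
      rw [hφright k, (hγ k).2.2.1]
  have hφmono : ∀ k, MonotoneOn (φ k) (Set.Icc (a k) (a (k+1))) := by
    intro k s _ t _ hst
    have h2p : (0:ℝ) ≤ 2^(k+1) := by positivity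
    simp only [hφdef]
    nlinarith
  have hφimg : ∀ k, φ k '' Set.Icc (a k) (a (k+1)) = Set.Icc 0 1 := by
    intro k
    have h2 : (fun t : ℝ => (t - a k) * 2^(k+1)) = (fun t : ℝ => (2:ℝ)^(k+1) * t + (-(a k * 2^(k+1)))) := by
      funext t; ring
    simp only [hφdef]
    rw [h2, Set.image_affine_Icc' (by positivity : (0:ℝ) < 2^(k+1))]
    have e1 : (2:ℝ)^(k+1) * a k + (-(a k * 2^(k+1))) = 0 := by ring
    have e2 : (2:ℝ)^(k+1) * a (k+1) + (-(a k * 2^(k+1))) = 1 := by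
      have := hφright k
      simp only [hφdef] at this
      linarith [this]
    rw [e1, e2]
  have hblock : ∀ k, eVariationOn Γ (Set.Icc (a k) (a (k+1))) = eVariationOn (γ k) (Set.Icc 0 1) := by
    intro k
    rw [eVariationOn.eq_of_eqOn (hEq k), eVariationOn.comp_eq_of_monotoneOn _ _ (hφmono k),
      hφimg k]
  have hpartial : ∀ m : ℕ, eVariationOn Γ (Set.Icc 0 (a m))
      ≤ ∑ k ∈ Finset.range m, ENNReal.ofReal (r k) := by
    intro m
    induction m with
    | zero =>
      rw [← ha0, Set.Icc_self]
      simp [eVariationOn.subsingleton Γ (Set.subsingleton_singleton)]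
    | succ m ih =>
      have key := eVariationOn.Icc_add_Icc Γ (s := Set.univ) (a := (0:ℝ)) (b := a m)
        (c := a (m+1)) (ha0le m) (haS m).le trivial
      simp only [Set.univ_inter] at key
      rw [← key, Finset.sum_range_succ]
      exact add_le_add ih ((hblock m).le.trans (hℓ m).le)
  have hpartial' : ∀ m : ℕ, eVariationOn Γ (Set.Icc 0 (a m))
      ≤ ENNReal.ofReal (C * dist q p + ε) := fun m => (hpartial m).trans (hsumE m)
  -- membership and endpoints of Γ
  have hΓmem : ∀ t ∈ Set.Icc (0:ℝ) 1, Γ t ∈ Y := by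
    intro t ht
    rcases lt_or_eq_of_le ht.2 with h1 | h1
    · have hlow := hKlow ht.1 h1
      have hup := hKmem h1
      rw [hΓblock (K t) t hlow hup]
      exact hBY ((hγ (K t)).2.2.2 _ (hφmem _ _ hlow hup.le))
    · rw [h1, hΓ1]; exact hpY
  have hΓ0 : Γ 0 = q := by
    have h := hΓa 0
    rw [ha0] at h
    exact h
  -- continuity of Γ
  have hblockCont : ∀ k, ContinuousOn Γ (Set.Icc (a k) (a (k+1))) := by
    intro k
    have hmapsφ : Set.MapsTo (φ k) (Set.Icc (a k) (a (k+1))) (Set.Icc 0 1) :=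
      fun t ht => hφmem k t ht.1 ht.2
    have hcφ : ContinuousOn (φ k) (Set.Icc (a k) (a (k+1))) := by fun_prop
    exact ((hγ k).1.comp hcφ hmapsφ).congr (hEq k)
  have hcoK : ∀ m, ContinuousOn Γ (Set.Icc 0 (a m)) := by
    intro m
    induction m with
    | zero =>
      rw [ha0, Set.Icc_self]
      exact continuousOn_singleton Γ 0
    | succ m ih =>
      have hun : Set.Icc (0:ℝ) (a (m+1)) = Set.Icc 0 (a m) ∪ Set.Icc (a m) (a (m+1)) :=
        (Set.Icc_union_Icc_eq_Icc (ha0le m) (haS m).le).symm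
      rw [hun]
      exact continuousOn_union_closed isClosed_Icc isClosed_Icc ih (hblockCont m)
  have hΓcont : ContinuousOn Γ (Set.Icc 0 1) := by
    intro t₀ ht₀
    rcases lt_or_eq_of_le ht₀.2 with h1 | h1
    · have hup := hKmem h1
      have hmem : Set.Iio (a (K t₀ + 1)) ∈ nhds t₀ := Iio_mem_nhds hup
      have hsub : Set.Icc (0:ℝ) 1 ∩ Set.Iio (a (K t₀ + 1)) ⊆ Set.Icc 0 (a (K t₀ + 1)) :=
        fun v hv => ⟨hv.1.1, hv.2.le⟩
      exact (hcoK (K t₀ + 1) t₀ ⟨ht₀.1, hup.le⟩).mono_of_mem_nhdsWithin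
        (Filter.mem_of_superset (inter_mem_nhdsWithin _ hmem) hsub)
    · subst h1
      have htend : Filter.Tendsto Γ (nhdsWithin 1 (Set.Icc 0 1)) (nhds p) := by
        rw [EMetric.tendsto_nhds]
        intro ε' hε'
        obtain ⟨ρ, hρ0, hρε⟩ := ENNReal.lt_iff_exists_nnreal_btwn.mp hε'
        have hρR : (0:ℝ) < ρ := by exact_mod_cast ENNReal.coe_pos.mp hρ0
        obtain ⟨m₀, hm₀⟩ := exists_pow_lt_of_lt_one
          (show (0:ℝ) < ρ / ((3*C/2+2)*δ) by positivity) (by norm_num : (1:ℝ)/2 < 1)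
        set m := m₀ + 1 with hmdef
        have hbound : (3*C/2+2)*δ*(1/2)^m < ρ := by
          have h1 : ((1:ℝ)/2)^m ≤ (1/2)^m₀ :=
            pow_le_pow_of_le_one (by norm_num) (by norm_num) (Nat.le_succ _)
          have h2 := (lt_div_iff₀ (by positivity : (0:ℝ) < (3*C/2+2)*δ)).mp hm₀
          have h3 := mul_le_mul_of_nonneg_right h1 (by positivity : (0:ℝ) ≤ (3*C/2+2)*δ)
          linarith
        filter_upwards [mem_nhdsWithin_of_mem_nhds (Ioi_mem_nhds (halt1 m)),
          self_mem_nhdsWithin] with t hti htIcc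
        rcases lt_or_eq_of_le (htIcc.2 : t ≤ 1) with ht1 | ht1
        · have hkm : m ≤ K t := by
            by_contra h
            push_neg at h
            have hle : a (K t + 1) ≤ a m := hamono h
            have : t < a m := lt_of_lt_of_le (hKmem ht1) hle
            exact absurd this (not_lt.mpr (le_of_lt hti))
          obtain ⟨j, hj⟩ := Nat.exists_eq_succ_of_ne_zero (show K t ≠ 0 by omega)
          have hlow : a (K t) ≤ t := hKlow htIcc.1 ht1
          have hΓt : Γ t = γ (K t) (φ (K t) t) := hΓblock (K t) t hlow (hKmem ht1)
          have hd1 : edist (Γ t) (x (K t + 1)) ≤ ENNReal.ofReal (r (K t)) := by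
            rw [hΓt, ← (hγ (K t)).2.2.1]
            exact (eVariationOn.edist_le (γ (K t)) (hφmem (K t) t hlow (hKmem ht1).le)
              (Set.right_mem_Icc.mpr zero_le_one)).trans (hℓ (K t)).le
          have hd2 : edist (x (K t + 1)) p ≤ ENNReal.ofReal (δ * (1/2)^(K t + 1)) := by
            rw [edist_dist]
            exact ENNReal.ofReal_le_ofReal (hxp (K t))
          have hsum2 : r (K t) + δ * (1/2)^(K t + 1) ≤ (3*C/2+2)*δ*(1/2)^m := by
            have h1 : r (K t) ≤ (3*C/2+1)*(δ*(1/2)^(K t)) := by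
              rw [hj]; exact htermS j
            have h2 : δ * (1/2)^(K t + 1) ≤ δ * (1/2)^(K t) :=
              mul_le_mul_of_nonneg_left
                (pow_le_pow_of_le_one (by norm_num) (by norm_num) (Nat.le_succ _)) hδ.le
            have h3 : δ * (1/2)^(K t) ≤ δ * (1/2)^m :=
              mul_le_mul_of_nonneg_left
                (pow_le_pow_of_le_one (by norm_num) (by norm_num) hkm) hδ.le
            have h4 := mul_le_mul_of_nonneg_left h3 (by linarith : (0:ℝ) ≤ 3*C/2+2)
            linarith
          calc edist (Γ t) p ≤ edist (Γ t) (x (K t + 1)) + edist (x (K t + 1)) p :=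
                edist_triangle _ _ _
            _ ≤ ENNReal.ofReal (r (K t)) + ENNReal.ofReal (δ * (1/2)^(K t + 1)) :=
                add_le_add hd1 hd2
            _ = ENNReal.ofReal (r (K t) + δ * (1/2)^(K t + 1)) :=
                (ENNReal.ofReal_add (hrpos (K t)).le (by positivity)).symm
            _ ≤ ENNReal.ofReal ((3*C/2+2)*δ*(1/2)^m) := ENNReal.ofReal_le_ofReal hsum2
            _ < (ρ : ℝ≥0∞) := by
                rw [← ENNReal.ofReal_coe_nnreal, ENNReal.ofReal_lt_ofReal_iff hρR]
                exact hbound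
            _ < ε' := hρε
        · rw [ht1, hΓ1, edist_self]
          exact hε'
      rw [← hΓ1] at htend
      exact htend
  -- the total variation bound
  have hV : eVariationOn Γ (Set.Icc 0 1) ≤ ENNReal.ofReal (C * dist q p + ε) := by
    rw [eVariationOn]
    refine iSup_le ?_
    rintro ⟨n, u, hu, hus⟩
    dsimp only
    refine ENNReal.le_of_forall_pos_le_add fun ε₂ hε₂ _ => ?_
    set T : ℝ := (Finset.range (n+1)).sup'
      (Finset.nonempty_range_iff.mpr (Nat.succ_ne_zero n)) (fun i => if u i < 1 then u i else 0)
      with hTdef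
    have hT1 : T < 1 := by
      rw [hTdef, Finset.sup'_lt_iff]
      intro i _
      split
      · assumption
      · norm_num
    have hTub : ∀ i, i ≤ n → u i < 1 → u i ≤ T := by
      intro i hi hui
      have h := Finset.le_sup' (f := fun i => if u i < 1 then u i else 0)
        (Finset.mem_range.mpr (Nat.lt_succ_of_le hi))
      rw [if_pos hui] at h
      exact h
    obtain ⟨k₁, hk₁⟩ := exists_pow_lt_of_lt_one (sub_pos.mpr hT1) (by norm_num : (1:ℝ)/2 < 1)
    have hε₂R : (0:ℝ) < ε₂ := hε₂
    obtain ⟨k₂, hk₂⟩ := exists_pow_lt_of_lt_one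
      (show (0:ℝ) < ε₂/δ by positivity) (by norm_num : (1:ℝ)/2 < 1)
    set K₀ := max k₁ k₂ + 1 with hK₀def
    set b := a K₀ with hbdef
    have hTb : T ≤ b := by
      have h1 : T < a k₁ := by simp only [hadef]; linarith
      have h2 : a k₁ ≤ a K₀ := hamono (by omega)
      rw [hbdef]; linarith
    have hb0 : 0 ≤ b := ha0le K₀
    have hjump : edist (Γ 1) (Γ b) < (ε₂ : ℝ≥0∞) := by
      rw [hΓ1, hbdef, hΓa K₀, edist_dist, dist_comm]
      calc ENNReal.ofReal (dist (x K₀) p) ≤ ENNReal.ofReal (δ * (1/2)^K₀) :=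
            ENNReal.ofReal_le_ofReal (hxp (max k₁ k₂))
        _ < ENNReal.ofReal ε₂ := by
            rw [ENNReal.ofReal_lt_ofReal_iff hε₂R]
            have hmono2 : ((1:ℝ)/2)^K₀ ≤ (1/2)^k₂ :=
              pow_le_pow_of_le_one (by norm_num) (by norm_num) (by omega)
            have h5 := (lt_div_iff₀ hδ).mp hk₂
            have h6 := mul_le_mul_of_nonneg_left hmono2 hδ.le
            linarith
        _ = (ε₂ : ℝ≥0∞) := ENNReal.ofReal_coe_nnreal
    set w : ℕ → ℝ := fun i => if u (min i n) < 1 then u (min i n) else b with hwdef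
    have hu1 : ∀ i, ¬(u i < 1) → u i = 1 := fun i h => le_antisymm (hus i).2 (not_lt.mp h)
    have hwmono : Monotone w := by
      intro i j hij
      simp only [hwdef]
      have hmin : min i n ≤ min j n := min_le_min hij le_rfl
      by_cases hi : u (min i n) < 1
      · by_cases hj : u (min j n) < 1
        · rw [if_pos hi, if_pos hj]; exact hu hmin
        · rw [if_pos hi, if_neg hj]
          exact (hTub _ (min_le_right _ _) hi).trans hTb
      · have h1 : u (min i n) = 1 := hu1 _ hi
        have h2 : u (min j n) = 1 := le_antisymm (hus _).2 (h1 ▸ hu hmin)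
        rw [if_neg hi, if_neg (by rw [h2]; exact lt_irrefl 1)]
    have hwmem : ∀ i, w i ∈ Set.Icc (0:ℝ) b := by
      intro i
      simp only [hwdef]
      split
      · next h => exact ⟨(hus _).1, (hTub _ (min_le_right _ _) h).trans hTb⟩
      · exact ⟨hb0, le_rfl⟩
    have hwsum := eVariationOn.sum_le (f := Γ) (n := n) hwmono hwmem
    set c := edist (Γ (1:ℝ)) (Γ b) with hcdef
    have hterm : ∀ i, i < n → edist (Γ (u (i+1))) (Γ (u i)) ≤
        edist (Γ (w (i+1))) (Γ (w i)) + (if (u i < 1 ∧ ¬(u (i+1) < 1)) then c else 0) := by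
      intro i hi
      have hmi : min i n = i := min_eq_left (le_of_lt hi)
      have hmi1 : min (i+1) n = i+1 := min_eq_left hi
      by_cases h1 : u i < 1
      · by_cases h2 : u (i+1) < 1
        · simp only [hwdef, hmi, hmi1, if_pos h1, if_pos h2,
            if_neg (fun hcond => hcond.2 h2 : ¬(u i < 1 ∧ ¬(u (i+1) < 1)))]
          rw [add_zero]
        · have hui1 : u (i+1) = 1 := hu1 _ h2
          simp only [hwdef, hmi, hmi1, if_pos h1, if_neg h2,
            if_pos (⟨h1, h2⟩ : u i < 1 ∧ ¬(u (i+1) < 1))]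
          rw [hui1]
          calc edist (Γ 1) (Γ (u i)) ≤ edist (Γ 1) (Γ b) + edist (Γ b) (Γ (u i)) :=
                edist_triangle _ _ _
            _ = edist (Γ b) (Γ (u i)) + c := by rw [hcdef, add_comm]
      · have h1' : u i = 1 := hu1 _ h1
        have h2' : u (i+1) = 1 := le_antisymm (hus _).2 (h1' ▸ hu (Nat.le_succ i))
        rw [h1', h2', edist_self]
        exact zero_le
    have huniq : ∀ i j, (u i < 1 ∧ ¬(u (i+1) < 1)) → (u j < 1 ∧ ¬(u (j+1) < 1)) → i = j := by
      intro i j hi hj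
      by_contra hne
      rcases Nat.lt_or_ge i j with h | h
      · have hle : u (i+1) ≤ u j := hu h
        rw [hu1 _ hi.2] at hle
        exact absurd (lt_of_le_of_lt hle hj.1) (lt_irrefl 1)
      · have hj' : j + 1 ≤ i := by omega
        have hle : u (j+1) ≤ u i := hu hj'
        rw [hu1 _ hj.2] at hle
        exact absurd (lt_of_le_of_lt hle hi.1) (lt_irrefl 1)
    have hindsum : (∑ i ∈ Finset.range n, if (u i < 1 ∧ ¬(u (i+1) < 1)) then c else 0) ≤ c := by
      by_cases hex : ∃ i ∈ Finset.range n, (u i < 1 ∧ ¬(u (i+1) < 1))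
      · obtain ⟨i₀, hi₀r, hi₀⟩ := hex
        rw [Finset.sum_eq_single_of_mem i₀ hi₀r
          (fun j _ hne => if_neg (fun hj => hne (huniq j i₀ hj hi₀))), if_pos hi₀]
      · push_neg at hex
        rw [Finset.sum_eq_zero (fun i hir => if_neg (fun hc => hc.2 (hex i hir hc.1)))]
        exact zero_le
    calc (∑ i ∈ Finset.range n, edist (Γ (u (i+1))) (Γ (u i)))
        ≤ ∑ i ∈ Finset.range n, (edist (Γ (w (i+1))) (Γ (w i))
            + if (u i < 1 ∧ ¬(u (i+1) < 1)) then c else 0) :=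
          Finset.sum_le_sum (fun i hi => hterm i (Finset.mem_range.mp hi))
      _ = (∑ i ∈ Finset.range n, edist (Γ (w (i+1))) (Γ (w i)))
            + ∑ i ∈ Finset.range n, (if (u i < 1 ∧ ¬(u (i+1) < 1)) then c else 0) :=
          Finset.sum_add_distrib
      _ ≤ eVariationOn Γ (Set.Icc 0 b) + c := add_le_add hwsum hindsum
      _ ≤ ENNReal.ofReal (C * dist q p + ε) + ε₂ := add_le_add (hpartial' K₀) hjump.le
  -- conclusion
  have hPathΓ : PathIn Y q p Γ := ⟨hΓcont, hΓ0, hΓ1, hΓmem⟩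
  calc innerDist Y q p ≤ eVariationOn Γ (Set.Icc 0 1) := innerDist_le_path hPathΓ
    _ ≤ ENNReal.ofReal (C * dist q p + ε) := hV
    _ = ENNReal.ofReal (C * dist q p) + ε := by
        rw [ENNReal.ofReal_add (by positivity) (by positivity), ENNReal.ofReal_coe_nnreal]

end Helpers2

set_option maxHeartbeats 2000000 in
/-- If the path-connected set `X ⊆ ℝⁿ` is a finite union `X = ⋃ i, B i` where each `B i` is
`C`-Lipschitz normally embedded, then `d_{X,inn} ≤ (#I · C) · d_{X,diam}` on `X`. -/
theorem stmt_0 {n : ℕ} (X : Set (EuclideanSpace ℝ (Fin n))) (hX : IsPathConnected X)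
    {I : Type*} [Fintype I] (B : I → Set (EuclideanSpace ℝ (Fin n)))
    (hunion : X = ⋃ i, B i) (C : ℝ) (hC : 0 < C)
    (hLNE : ∀ i, ∀ x ∈ B i, ∀ y ∈ B i, innerDist (B i) x y ≤ ENNReal.ofReal (C * ‖x - y‖)) :
    ∀ x ∈ X, ∀ y ∈ X,
      innerDist X x y ≤ (Fintype.card I : ℝ≥0∞) * ENNReal.ofReal C * diamDist X x y := by
  intro x hx y hy
  classical
  have hBX : ∀ i, B i ⊆ X := fun i => hunion ▸ Set.subset_iUnion B i
  have hxU : x ∈ ⋃ i, B i := hunion ▸ hx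
  obtain ⟨i₀, hi₀⟩ := Set.mem_iUnion.mp hxU
  haveI : Nonempty I := ⟨i₀⟩
  have H : ∀ γ : ℝ → EuclideanSpace ℝ (Fin n), PathIn X x y γ →
      innerDist X x y ≤ (Fintype.card I : ℝ≥0∞) * ENNReal.ofReal C
        * EMetric.diam (γ '' Set.Icc (0:ℝ) 1) := by
    intro γ hγ
    obtain ⟨hγc, hγ0, hγ1, hγm⟩ := hγ
    set D := EMetric.diam (γ '' Set.Icc (0:ℝ) 1) with hD
    have hadh : ∀ s : ℝ, 0 ≤ s → s < 1 →
        ∃ i : I, ∀ δ : ℝ, 0 < δ → ∃ u, s < u ∧ u ≤ 1 ∧ u < s + δ ∧ γ u ∈ B i := by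
      intro s hs0 hs1
      by_contra hcon
      push_neg at hcon
      choose δf hδf hnot using hcon
      set d := Finset.univ.inf' Finset.univ_nonempty δf with hd
      have hdpos : 0 < d := by
        rw [hd, Finset.lt_inf'_iff]
        exact fun i _ => hδf i
      set u := min (s + d/2) 1 with hu
      have hsu : s < u := lt_min (by linarith) hs1
      have hu1 : u ≤ 1 := min_le_right _ _
      have hmem : γ u ∈ ⋃ i, B i := hunion ▸ hγm u ⟨by linarith, hu1⟩
      obtain ⟨i, hi⟩ := Set.mem_iUnion.mp hmem
      refine hnot i u hsu hu1 ?_ hi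
      have h1 : d ≤ δf i := Finset.inf'_le _ (Finset.mem_univ i)
      have h2 : u ≤ s + d/2 := min_le_left _ _
      linarith
    have key : ∀ m : ℕ, ∀ J : Finset I, J.card ≤ m → ∀ s : ℝ, s ∈ Set.Icc (0:ℝ) 1 →
        (∀ j, (∃ u, s < u ∧ u ≤ 1 ∧ γ u ∈ B j) → j ∈ J) →
        innerDist X (γ s) (γ 1) ≤ (J.card : ℝ≥0∞) * (ENNReal.ofReal C * D) := by
      intro m
      induction m with
      | zero =>
        intro J hJ0 s hs hJsub
        rcases lt_or_eq_of_le hs.2 with hs1 | hs1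
        · obtain ⟨i, hi⟩ := hadh s hs.1 hs1
          obtain ⟨u, hu1, hu2, _, hu4⟩ := hi 1 one_pos
          have hiJ : i ∈ J := hJsub i ⟨u, hu1, hu2, hu4⟩
          have : J = ∅ := Finset.card_eq_zero.mp (by omega)
          rw [this] at hiJ
          simp at hiJ
        · rw [hs1, innerDist_self (hγm 1 (Set.right_mem_Icc.mpr zero_le_one))]
          exact zero_le
      | succ m ih =>
        intro J hJ s hs hJsub
        rcases lt_or_eq_of_le hs.2 with hs1 | hs1
        swap
        · rw [hs1, innerDist_self (hγm 1 (Set.right_mem_Icc.mpr zero_le_one))]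
          exact zero_le
        obtain ⟨i, hi⟩ := hadh s hs.1 hs1
        have hiJ : i ∈ J := hJsub i (by
          obtain ⟨u, hu1, hu2, _, hu4⟩ := hi 1 one_pos
          exact ⟨u, hu1, hu2, hu4⟩)
        set S' := {u : ℝ | u ∈ Set.Icc s 1 ∧ γ u ∈ B i} with hS'
        have hS'ne : S'.Nonempty := by
          obtain ⟨u, hu1, hu2, _, hu4⟩ := hi 1 one_pos
          exact ⟨u, ⟨⟨hu1.le, hu2⟩, hu4⟩⟩
        have hS'bdd : BddAbove S' := ⟨1, fun u hu => hu.1.2⟩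
        set T := sSup S' with hT
        have hsT : s ≤ T := by
          obtain ⟨u, hu⟩ := hS'ne
          exact (hu.1.1).trans (le_csSup hS'bdd hu)
        have hT1 : T ≤ 1 := csSup_le hS'ne fun u hu => hu.1.2
        have hTmem : T ∈ Set.Icc (0:ℝ) 1 := ⟨hs.1.trans hsT, hT1⟩
        have hconts := hγc s hs
        have hcontT := hγc T hTmem
        have hsclos : γ s ∈ closure (B i) := by
          rw [Metric.mem_closure_iff]
          intro r hr
          obtain ⟨δ', hδ', hnear'⟩ := Metric.tendsto_nhdsWithin_nhds.mp hconts r hr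
          obtain ⟨u', hsu', hu1', husδ', huB'⟩ := hi (min δ' 1) (lt_min hδ' one_pos)
          refine ⟨γ u', huB', ?_⟩
          rw [dist_comm]
          refine hnear' ⟨hs.1.trans hsu'.le, hu1'⟩ ?_
          rw [Real.dist_eq, abs_of_pos (by linarith)]
          have := min_le_left δ' 1
          linarith
        have hTclos : γ T ∈ closure (B i) := by
          rw [Metric.mem_closure_iff]
          intro r hr
          obtain ⟨δ', hδ', hnear'⟩ := Metric.tendsto_nhdsWithin_nhds.mp hcontT r hr
          obtain ⟨v', hv'S, hv'gt⟩ := exists_lt_of_lt_csSup hS'ne (by linarith : T - δ' < T)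
          have hvle : v' ≤ T := le_csSup hS'bdd hv'S
          refine ⟨γ v', hv'S.2, ?_⟩
          rw [dist_comm]
          refine hnear' ⟨hs.1.trans hv'S.1.1, hv'S.1.2⟩ ?_
          rw [Real.dist_eq, abs_of_nonpos (by linarith)]
          linarith
        have hstep : innerDist X (γ s) (γ T) ≤ ENNReal.ofReal C * D := by
          refine ENNReal.le_of_forall_pos_le_add fun ε hε _ => ?_
          have hεR : (0:ℝ) < ε := hε
          set η := (ε:ℝ) / (2*C) with hη
          have hηpos : 0 < η := by positivity
          obtain ⟨δs, hδs, hnear_s⟩ := Metric.tendsto_nhdsWithin_nhds.mp hconts η hηpos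
          obtain ⟨δT, hδT, hnear_T⟩ := Metric.tendsto_nhdsWithin_nhds.mp hcontT η hηpos
          obtain ⟨u, hsu, hu1, husδ, huB⟩ := hi (min δs 1) (lt_min hδs one_pos)
          have huIcc : u ∈ Set.Icc (0:ℝ) 1 := ⟨hs.1.trans hsu.le, hu1⟩
          have hdist_su : dist (γ u) (γ s) < η := by
            refine hnear_s huIcc ?_
            rw [Real.dist_eq, abs_of_pos (by linarith)]
            have := min_le_left δs 1
            linarith
          obtain ⟨v, hvS', hvT⟩ := exists_lt_of_lt_csSup hS'ne (by linarith : T - δT < T)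
          have hvle : v ≤ T := le_csSup hS'bdd hvS'
          have hvIcc : v ∈ Set.Icc (0:ℝ) 1 := ⟨hs.1.trans hvS'.1.1, hvS'.1.2⟩
          have hdist_vT : dist (γ v) (γ T) < η := by
            refine hnear_T hvIcc ?_
            rw [Real.dist_eq, abs_of_nonpos (by linarith)]
            linarith
          have hofC : ∀ a b : EuclideanSpace ℝ (Fin n),
              ENNReal.ofReal (C * ‖a - b‖) = ENNReal.ofReal C * edist a b := by
            intro a b
            rw [ENNReal.ofReal_mul hC.le, edist_dist, dist_eq_norm]
          have leg1 : innerDist X (γ s) (γ u) ≤ ENNReal.ofReal C * ENNReal.ofReal η := by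
            rw [innerDist_comm]
            refine le_trans (innerDist_le_of_closure (hBX i) hC (hLNE i) huB hsclos
              (hγm s hs)) ?_
            rw [hofC]
            exact mul_le_mul_right (by rw [edist_dist]; exact ENNReal.ofReal_le_ofReal hdist_su.le) _
          have leg3 : innerDist X (γ v) (γ T) ≤ ENNReal.ofReal C * ENNReal.ofReal η := by
            refine le_trans (innerDist_le_of_closure (hBX i) hC (hLNE i) hvS'.2 hTclos
              (hγm T hTmem)) ?_
            rw [hofC]
            exact mul_le_mul_right (by rw [edist_dist]; exact ENNReal.ofReal_le_ofReal hdist_vT.le) _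
          have leg2 : innerDist X (γ u) (γ v) ≤ ENNReal.ofReal C * D := by
            refine le_trans (innerDist_mono (hBX i) _ _) ?_
            refine le_trans (hLNE i _ huB _ hvS'.2) ?_
            rw [hofC]
            exact mul_le_mul_right (EMetric.edist_le_diam_of_mem
              (Set.mem_image_of_mem _ huIcc) (Set.mem_image_of_mem _ hvIcc)) _
          have hεeq : ENNReal.ofReal C * ENNReal.ofReal η + ENNReal.ofReal C * ENNReal.ofReal η
              = (ε : ℝ≥0∞) := by
            rw [← ENNReal.ofReal_mul hC.le, ← ENNReal.ofReal_add (by positivity) (by positivity)]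
            have : C * η + C * η = (ε:ℝ) := by rw [hη]; field_simp; ring
            rw [this, ENNReal.ofReal_coe_nnreal]
          calc innerDist X (γ s) (γ T)
              ≤ innerDist X (γ s) (γ u) + innerDist X (γ u) (γ T) := innerDist_triangle _ _ _
            _ ≤ innerDist X (γ s) (γ u)
                + (innerDist X (γ u) (γ v) + innerDist X (γ v) (γ T)) :=
                add_le_add_right (innerDist_triangle _ _ _) _
            _ ≤ ENNReal.ofReal C * ENNReal.ofReal η
                + (ENNReal.ofReal C * D + ENNReal.ofReal C * ENNReal.ofReal η) :=
                add_le_add leg1 (add_le_add leg2 leg3)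
            _ = ENNReal.ofReal C * D
                + (ENNReal.ofReal C * ENNReal.ofReal η + ENNReal.ofReal C * ENNReal.ofReal η) := by
                ring
            _ = ENNReal.ofReal C * D + ε := by rw [hεeq]
        have hJT : ∀ j, (∃ u, T < u ∧ u ≤ 1 ∧ γ u ∈ B j) → j ∈ J.erase i := by
          rintro j ⟨u, hTu, hu1, huB⟩
          refine Finset.mem_erase.mpr ⟨?_, hJsub j ⟨u, lt_of_le_of_lt hsT hTu, hu1, huB⟩⟩
          rintro rfl
          have hmem : u ∈ S' := ⟨⟨hsT.trans hTu.le, hu1⟩, huB⟩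
          have : u ≤ T := le_csSup hS'bdd hmem
          linarith
        have hcard' : (J.erase i).card ≤ m := by
          have := Finset.card_erase_add_one hiJ
          omega
        have hrest := ih (J.erase i) hcard' T hTmem hJT
        calc innerDist X (γ s) (γ 1)
            ≤ innerDist X (γ s) (γ T) + innerDist X (γ T) (γ 1) := innerDist_triangle _ _ _
          _ ≤ ENNReal.ofReal C * D + ((J.erase i).card : ℝ≥0∞) * (ENNReal.ofReal C * D) :=
              add_le_add hstep hrest
          _ = (((J.erase i).card : ℝ≥0∞) + 1) * (ENNReal.ofReal C * D) := by ring
          _ = (J.card : ℝ≥0∞) * (ENNReal.ofReal C * D) := by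
              rw [← Finset.card_erase_add_one hiJ]
              push_cast
              ring
    have hfin := key (Fintype.card I) Finset.univ (le_of_eq Finset.card_univ) 0
      (Set.left_mem_Icc.mpr zero_le_one) (fun j _ => Finset.mem_univ j)
    rw [hγ0, hγ1] at hfin
    calc innerDist X x y ≤ ((Finset.univ : Finset I).card : ℝ≥0∞) * (ENNReal.ofReal C * D) :=
          hfin
      _ = (Fintype.card I : ℝ≥0∞) * ENNReal.ofReal C * D := by
          rw [Finset.card_univ, mul_assoc]
  have hK0 : ((Fintype.card I : ℝ≥0∞) * ENNReal.ofReal C) ≠ 0 :=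
    mul_ne_zero (Nat.cast_ne_zero.mpr Fintype.card_pos.ne')
      (ne_of_gt (ENNReal.ofReal_pos.mpr hC))
  have hKtop : ((Fintype.card I : ℝ≥0∞) * ENNReal.ofReal C) ≠ ⊤ :=
    ENNReal.mul_ne_top (ENNReal.natCast_ne_top _) ENNReal.ofReal_ne_top
  have hdd0 : diamDist X x y = ⨅ (γ : ℝ → EuclideanSpace ℝ (Fin n)) (_ : PathIn X x y γ),
      EMetric.diam (γ '' Set.Icc (0:ℝ) 1) := rfl
  calc innerDist X x y
      ≤ ⨅ (γ : ℝ → EuclideanSpace ℝ (Fin n)) (_ : PathIn X x y γ),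
        (Fintype.card I : ℝ≥0∞) * ENNReal.ofReal C * EMetric.diam (γ '' Set.Icc (0:ℝ) 1) :=
        le_iInf fun γ => le_iInf fun hγ => H γ hγ
    _ = (Fintype.card I : ℝ≥0∞) * ENNReal.ofReal C * diamDist X x y := by
        rw [hdd0, ENNReal.mul_iInf_of_ne hK0 hKtop]
        refine iInf_congr fun γ => ?_
        rw [ENNReal.mul_iInf_of_ne hK0 hKtop]
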